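/- Let m be a positive integer and D, E ⊆ [m]. For i ∈ {0,1,2} let T_i be the number of ordered pairs (X, Y) of nonempty subsets of [m] with X ≠ Y, Y ∩ E = ∅, and χ(X|D) + χ(X ⊕ Y|D) = i, where X ⊕ Y = (X ∪ Y) \ (X ∩ Y) is the symmetric difference. Then T_0 = 2^m(2^(m−|E|) − 1) + 2^(m−|D|)(1 + 2^(m−|D∪E|) − 2^(m+1−|E|)), T_1 = 2(2^(m−|D|) − 1)(2^(m−|E|) − 2^(m−|D∪E|)), and T_2 = (2^(m−|D|) − 2)(2^(m−|D∪E|) − 1). -/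

import Mathlib

/-- χ(X|D) = 1 if X ∩ D = ∅ and 0 otherwise. -/
def chi {m : ℕ} (X D : Finset (Fin m)) : ℕ := if X ∩ D = ∅ then 1 else 0

open Finset

variable {m : ℕ}

private lemma chi_sum_zero {X Z D : Finset (Fin m)} :
    chi X D + chi Z D = 0 ↔ ¬(X ∩ D = ∅) ∧ ¬(Z ∩ D = ∅) := by
  unfold chi; split_ifs with h1 h2 h2 <;> simp [h1, h2]

private lemma chi_sum_one {X Z D : Finset (Fin m)} :
    chi X D + chi Z D = 1 ↔
      (X ∩ D = ∅ ∧ ¬(Z ∩ D = ∅)) ∨ (¬(X ∩ D = ∅) ∧ Z ∩ D = ∅) := by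
  unfold chi; split_ifs with h1 h2 h2 <;> simp [h1, h2]

private lemma chi_sum_two {X Z D : Finset (Fin m)} :
    chi X D + chi Z D = 2 ↔ X ∩ D = ∅ ∧ Z ∩ D = ∅ := by
  unfold chi; split_ifs with h1 h2 h2 <;> simp [h1, h2]

private lemma fiber_card (D S : Finset (Fin m)) (hS : S ⊆ D) :
    (univ.filter fun X : Finset (Fin m) => X ∩ D = S).card = 2 ^ (m - D.card) := by
  have h : (univ.filter fun X : Finset (Fin m) => X ∩ D = S).card = Dᶜ.powerset.card := by
    apply Finset.card_nbij' (fun X => X \ D) (fun T => S ∪ T)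
    · intro X hX
      rw [mem_coe, mem_powerset]
      intro x hx
      simp only [mem_sdiff] at hx
      simp [mem_compl, hx.2]
    · intro T hT
      rw [mem_coe, mem_powerset] at hT
      simp only [mem_coe, mem_filter, mem_univ, true_and]
      ext x
      simp only [mem_inter, mem_union]
      constructor
      · rintro ⟨hx1 | hx2, hxD⟩
        · exact hx1
        · exact absurd hxD (by simpa [mem_compl] using hT hx2)
      · intro hx; exact ⟨Or.inl hx, hS hx⟩
    · intro X hX
      simp only [mem_coe, mem_filter, mem_univ, true_and] at hX
      rw [← hX]
      ext x; simp only [mem_union, mem_inter, mem_sdiff]; tauto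
    · intro T hT
      rw [mem_coe, mem_powerset] at hT
      ext x
      simp only [mem_sdiff, mem_union]
      constructor
      · rintro ⟨hx1 | hx2, hxD⟩
        · exact absurd (hS hx1) hxD
        · exact hx2
      · intro hx
        exact ⟨Or.inr hx, by simpa [mem_compl] using hT hx⟩
  rw [h, Finset.card_powerset, Finset.card_compl, Fintype.card_fin]

private lemma chi_inter {X Y D : Finset (Fin m)} : (symmDiff X Y) ∩ D = ∅ ↔ X ∩ D = Y ∩ D := by
  have h : (symmDiff X Y) ∩ D = symmDiff (X ∩ D) (Y ∩ D) := by
    ext x; simp [Finset.mem_symmDiff]; tauto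
  rw [h, ← Finset.bot_eq_empty, symmDiff_eq_bot]

private lemma card_prod_filter (P : Finset (Fin m) × Finset (Fin m) → Prop) [DecidablePred P] :
    ((univ ×ˢ univ).filter P).card
      = ∑ Y : Finset (Fin m), (univ.filter fun X => P (X, Y)).card := by
  rw [Finset.card_eq_sum_card_fiberwise (f := Prod.snd) (t := univ) (fun x _ => mem_univ _)]
  refine Finset.sum_congr rfl fun Y _ => ?_
  apply Finset.card_nbij' Prod.fst (fun X => (X, Y))
  · intro p hp
    rw [mem_coe, mem_filter] at hp ⊢
    obtain ⟨hp1, hp2⟩ := hp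
    rw [mem_filter] at hp1
    refine ⟨mem_univ _, ?_⟩
    have : (p.1, Y) = p := Prod.ext rfl hp2.symm
    rw [this]
    exact hp1.2
  · intro X hX
    rw [mem_coe, mem_filter] at hX ⊢
    refine ⟨?_, rfl⟩
    rw [mem_filter]
    exact ⟨mem_product.2 ⟨mem_univ _, mem_univ _⟩, hX.2⟩
  · intro p hp
    rw [mem_coe, mem_filter] at hp
    exact Prod.ext rfl hp.2.symm
  · intro X _; rfl

private lemma card_filter_and_ne {α : Type*} [DecidableEq α] (s : Finset α) (Q : α → Prop)
    [DecidablePred Q] (a : α) (ha : Q a) (has : a ∈ s) :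
    (s.filter fun x => Q x ∧ x ≠ a).card + 1 = (s.filter Q).card := by
  rw [← Finset.filter_filter, Finset.filter_ne', Finset.card_erase_add_one]
  simp [has, ha]

private lemma card_filter_and_ne2 {α : Type*} [DecidableEq α] (s : Finset α) (Q : α → Prop)
    [DecidablePred Q] (a b : α) (ha : Q a) (hb : Q b) (hab : a ≠ b)
    (has : a ∈ s) (hbs : b ∈ s) :
    (s.filter fun x => Q x ∧ x ≠ a ∧ x ≠ b).card + 2 = (s.filter Q).card := by
  have h1 : (s.filter fun x => Q x ∧ x ≠ a ∧ x ≠ b)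
      = s.filter fun x => (Q x ∧ x ≠ a) ∧ x ≠ b := by
    apply Finset.filter_congr; intro x _; tauto
  have h2 : (s.filter fun x => (Q x ∧ x ≠ a) ∧ x ≠ b).card + 1
      = (s.filter fun x => Q x ∧ x ≠ a).card :=
    card_filter_and_ne s (fun x => Q x ∧ x ≠ a) b ⟨hb, hab.symm⟩ hbs
  have h3 := card_filter_and_ne s Q a ha has
  rw [h1]
  omega

open Finset
section Inner
variable (D E Y : Finset (Fin m))

private lemma inner_zero_of (i : ℕ) (h : ¬(Y ≠ ∅ ∧ Y ∩ E = ∅)) :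
    (univ.filter fun X : Finset (Fin m) =>
      X ≠ ∅ ∧ Y ≠ ∅ ∧ X ≠ Y ∧ Y ∩ E = ∅ ∧ chi X D + chi (symmDiff X Y) D = i).card = 0 := by
  rw [Finset.card_eq_zero, Finset.filter_eq_empty_iff]
  intro X _
  tauto

private lemma inner2_empty (hY : Y ≠ ∅) (hYE : Y ∩ E = ∅) (hYD : Y ∩ D = ∅) :
    (univ.filter fun X : Finset (Fin m) =>
      X ≠ ∅ ∧ Y ≠ ∅ ∧ X ≠ Y ∧ Y ∩ E = ∅ ∧ chi X D + chi (symmDiff X Y) D = 2).card + 2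
      = 2 ^ (m - D.card) := by
  have hfil : (univ.filter fun X : Finset (Fin m) =>
        X ≠ ∅ ∧ Y ≠ ∅ ∧ X ≠ Y ∧ Y ∩ E = ∅ ∧ chi X D + chi (symmDiff X Y) D = 2)
      = univ.filter fun X : Finset (Fin m) => X ∩ D = ∅ ∧ X ≠ ∅ ∧ X ≠ Y := by
    apply Finset.filter_congr
    intro X _
    simp only [chi_sum_two, chi_inter, hYD]
    tauto
  rw [hfil, card_filter_and_ne2 univ (fun X : Finset (Fin m) => X ∩ D = ∅) ∅ Y
    (by simp) hYD (Ne.symm hY) (mem_univ _) (mem_univ _),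
    fiber_card D ∅ (Finset.empty_subset D)]

private lemma inner2_ne (hYD : Y ∩ D ≠ ∅) :
    (univ.filter fun X : Finset (Fin m) =>
      X ≠ ∅ ∧ Y ≠ ∅ ∧ X ≠ Y ∧ Y ∩ E = ∅ ∧ chi X D + chi (symmDiff X Y) D = 2).card = 0 := by
  rw [Finset.card_eq_zero, Finset.filter_eq_empty_iff]
  intro X _
  simp only [chi_sum_two, chi_inter]
  rintro ⟨-, -, -, -, h1, h2⟩
  exact hYD (by rw [← h2]; exact h1)

private lemma inner1_empty (hYD : Y ∩ D = ∅) :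
    (univ.filter fun X : Finset (Fin m) =>
      X ≠ ∅ ∧ Y ≠ ∅ ∧ X ≠ Y ∧ Y ∩ E = ∅ ∧ chi X D + chi (symmDiff X Y) D = 1).card = 0 := by
  rw [Finset.card_eq_zero, Finset.filter_eq_empty_iff]
  intro X _
  simp only [chi_sum_one, chi_inter, hYD]
  tauto

private lemma inner1_ne (hYE : Y ∩ E = ∅) (hYD : Y ∩ D ≠ ∅) :
    (univ.filter fun X : Finset (Fin m) =>
      X ≠ ∅ ∧ Y ≠ ∅ ∧ X ≠ Y ∧ Y ∩ E = ∅ ∧ chi X D + chi (symmDiff X Y) D = 1).card + 2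
      = 2 * 2 ^ (m - D.card) := by
  have hY : Y ≠ ∅ := by rintro rfl; exact hYD (by simp)
  have hfil : (univ.filter fun X : Finset (Fin m) =>
      X ≠ ∅ ∧ Y ≠ ∅ ∧ X ≠ Y ∧ Y ∩ E = ∅ ∧ chi X D + chi (symmDiff X Y) D = 1)
      = (univ.filter fun X : Finset (Fin m) => X ∩ D = ∅ ∧ X ≠ ∅)
        ∪ (univ.filter fun X : Finset (Fin m) => X ∩ D = Y ∩ D ∧ X ≠ Y) := by
    ext X
    simp only [mem_union, mem_filter, mem_univ, true_and, chi_sum_one, chi_inter]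
    constructor
    · rintro ⟨hX, -, hXY, -, h | h⟩
      · exact Or.inl ⟨h.1, hX⟩
      · exact Or.inr ⟨h.2, hXY⟩
    · rintro (⟨h1, h2⟩ | ⟨h1, h2⟩)
      · have hne : ¬ X ∩ D = Y ∩ D := by rw [h1]; exact fun h => hYD h.symm
        exact ⟨h2, hY, fun h => hne (by rw [h]), hYE, Or.inl ⟨h1, hne⟩⟩
      · have hne : ¬ X ∩ D = ∅ := by rw [h1]; exact hYD
        refine ⟨fun h => hne (by rw [h]; simp), hY, h2, hYE, Or.inr ⟨hne, h1⟩⟩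
  have hdisj : Disjoint (univ.filter fun X : Finset (Fin m) => X ∩ D = ∅ ∧ X ≠ ∅)
      (univ.filter fun X : Finset (Fin m) => X ∩ D = Y ∩ D ∧ X ≠ Y) := by
    rw [Finset.disjoint_left]
    intro X h1 h2
    rw [mem_filter] at h1 h2
    exact hYD (by rw [← h2.2.1, h1.2.1])
  have h1 : (univ.filter fun X : Finset (Fin m) => X ∩ D = ∅ ∧ X ≠ ∅).card + 1
      = (univ.filter fun X : Finset (Fin m) => X ∩ D = ∅).card :=
    card_filter_and_ne univ (fun X : Finset (Fin m) => X ∩ D = ∅) ∅ (by simp) (mem_univ _)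
  have h2 : (univ.filter fun X : Finset (Fin m) => X ∩ D = Y ∩ D ∧ X ≠ Y).card + 1
      = (univ.filter fun X : Finset (Fin m) => X ∩ D = Y ∩ D).card :=
    card_filter_and_ne univ (fun X : Finset (Fin m) => X ∩ D = Y ∩ D) Y rfl (mem_univ _)
  rw [fiber_card D ∅ (Finset.empty_subset D)] at h1
  rw [fiber_card D (Y ∩ D) Finset.inter_subset_right] at h2
  rw [hfil, Finset.card_union_of_disjoint hdisj]
  omega

private lemma inner0_empty (hY : Y ≠ ∅) (hYE : Y ∩ E = ∅) (hYD : Y ∩ D = ∅) :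
    (univ.filter fun X : Finset (Fin m) =>
      X ≠ ∅ ∧ Y ≠ ∅ ∧ X ≠ Y ∧ Y ∩ E = ∅ ∧ chi X D + chi (symmDiff X Y) D = 0).card
      + 2 ^ (m - D.card) = 2 ^ m := by
  have hfil : (univ.filter fun X : Finset (Fin m) =>
      X ≠ ∅ ∧ Y ≠ ∅ ∧ X ≠ Y ∧ Y ∩ E = ∅ ∧ chi X D + chi (symmDiff X Y) D = 0)
      = univ.filter fun X : Finset (Fin m) => ¬(X ∩ D = ∅) := by
    apply Finset.filter_congr
    intro X _
    simp only [chi_sum_zero, chi_inter, hYD]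
    constructor
    · tauto
    · intro h
      exact ⟨fun he => h (by rw [he]; simp), hY, fun he => h (by rw [he, hYD]), hYE, h, h⟩
  have hpart := Finset.card_filter_add_card_filter_not
    (s := (univ : Finset (Finset (Fin m)))) (p := fun X => X ∩ D = ∅)
  rw [fiber_card D ∅ (Finset.empty_subset D)] at hpart
  rw [hfil]
  have huniv : (univ : Finset (Finset (Fin m))).card = 2 ^ m := by
    rw [Finset.card_univ, Fintype.card_finset, Fintype.card_fin]
  omega

private lemma inner0_ne (hYE : Y ∩ E = ∅) (hYD : Y ∩ D ≠ ∅) :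
    (univ.filter fun X : Finset (Fin m) =>
      X ≠ ∅ ∧ Y ≠ ∅ ∧ X ≠ Y ∧ Y ∩ E = ∅ ∧ chi X D + chi (symmDiff X Y) D = 0).card
      + 2 * 2 ^ (m - D.card) = 2 ^ m := by
  have hY : Y ≠ ∅ := by rintro rfl; exact hYD (by simp)
  have hfil : (univ.filter fun X : Finset (Fin m) =>
      X ≠ ∅ ∧ Y ≠ ∅ ∧ X ≠ Y ∧ Y ∩ E = ∅ ∧ chi X D + chi (symmDiff X Y) D = 0)
      = univ.filter fun X : Finset (Fin m) => ¬(X ∩ D = ∅ ∨ X ∩ D = Y ∩ D) := by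
    apply Finset.filter_congr
    intro X _
    simp only [chi_sum_zero, chi_inter]
    constructor
    · tauto
    · intro h
      simp only [not_or] at h
      exact ⟨fun he => h.1 (by rw [he]; simp), hY, fun he => h.2 (by rw [he]), hYE, h.1, h.2⟩
  have hor : (univ.filter fun X : Finset (Fin m) => X ∩ D = ∅ ∨ X ∩ D = Y ∩ D)
      = (univ.filter fun X : Finset (Fin m) => X ∩ D = ∅)
        ∪ (univ.filter fun X : Finset (Fin m) => X ∩ D = Y ∩ D) := Finset.filter_or _ _ _
  have hdisj : Disjoint (univ.filter fun X : Finset (Fin m) => X ∩ D = ∅)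
      (univ.filter fun X : Finset (Fin m) => X ∩ D = Y ∩ D) := by
    rw [Finset.disjoint_left]
    intro X h1 h2
    rw [mem_filter] at h1 h2
    exact hYD (by rw [← h2.2, h1.2])
  have hpart := Finset.card_filter_add_card_filter_not
    (s := (univ : Finset (Finset (Fin m)))) (p := fun X => X ∩ D = ∅ ∨ X ∩ D = Y ∩ D)
  rw [hor, Finset.card_union_of_disjoint hdisj, fiber_card D ∅ (Finset.empty_subset D),
    fiber_card D (Y ∩ D) Finset.inter_subset_right] at hpart
  have huniv : (univ : Finset (Finset (Fin m))).card = 2 ^ m := by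
    rw [Finset.card_univ, Fintype.card_finset, Fintype.card_fin]
  rw [hfil]
  omega

end Inner

private lemma cardYc (D E : Finset (Fin m)) :
    (univ.filter fun Y : Finset (Fin m) => (Y ≠ ∅ ∧ Y ∩ E = ∅) ∧ Y ∩ D = ∅).card + 1
      = 2 ^ (m - (D ∪ E).card) := by
  have hfil : (univ.filter fun Y : Finset (Fin m) => (Y ≠ ∅ ∧ Y ∩ E = ∅) ∧ Y ∩ D = ∅)
      = univ.filter fun Y : Finset (Fin m) => Y ∩ (D ∪ E) = ∅ ∧ Y ≠ ∅ := by
    apply Finset.filter_congr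
    intro Y _
    rw [Finset.inter_union_distrib_left, Finset.union_eq_empty]
    tauto
  rw [hfil, card_filter_and_ne univ (fun Y : Finset (Fin m) => Y ∩ (D ∪ E) = ∅) ∅
    (by simp) (mem_univ _), fiber_card (D ∪ E) ∅ (Finset.empty_subset _)]

private lemma cardYbc (D E : Finset (Fin m)) :
    (univ.filter fun Y : Finset (Fin m) => (Y ≠ ∅ ∧ Y ∩ E = ∅) ∧ ¬(Y ∩ D = ∅)).card
      + 2 ^ (m - (D ∪ E).card) = 2 ^ (m - E.card) := by
  have hfil : (univ.filter fun Y : Finset (Fin m) => (Y ≠ ∅ ∧ Y ∩ E = ∅) ∧ ¬(Y ∩ D = ∅))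
      = (univ.filter fun Y : Finset (Fin m) => Y ∩ E = ∅).filter
          fun Y : Finset (Fin m) => ¬(Y ∩ D = ∅) := by
    rw [Finset.filter_filter]
    apply Finset.filter_congr
    intro Y _
    constructor
    · tauto
    · rintro ⟨h1, h2⟩
      exact ⟨⟨fun he => h2 (by rw [he]; simp), h1⟩, h2⟩
  have hp : ((univ.filter fun Y : Finset (Fin m) => Y ∩ E = ∅).filter
        fun Y : Finset (Fin m) => Y ∩ D = ∅)
      = univ.filter fun Y : Finset (Fin m) => Y ∩ (D ∪ E) = ∅ := by
    rw [Finset.filter_filter]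
    apply Finset.filter_congr
    intro Y _
    rw [Finset.inter_union_distrib_left, Finset.union_eq_empty]
    tauto
  have hpart := Finset.card_filter_add_card_filter_not
    (s := univ.filter fun Y : Finset (Fin m) => Y ∩ E = ∅)
    (p := fun Y : Finset (Fin m) => Y ∩ D = ∅)
  rw [hp, fiber_card (D ∪ E) ∅ (Finset.empty_subset _),
    fiber_card E ∅ (Finset.empty_subset _)] at hpart
  rw [hfil]
  omega

private lemma split3 (f : Finset (Fin m) → ℕ) (p1 p2 : Finset (Fin m) → Prop)
    [DecidablePred p1] [DecidablePred p2] (h0 : ∀ Y, ¬ p1 Y → f Y = 0) :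
    ∑ Y : Finset (Fin m), f Y
      = ∑ Y ∈ univ.filter (fun Y => p1 Y ∧ p2 Y), f Y
        + ∑ Y ∈ univ.filter (fun Y => p1 Y ∧ ¬ p2 Y), f Y := by
  rw [← Finset.sum_filter_add_sum_filter_not univ p1 f]
  have h : ∑ Y ∈ univ.filter (fun Y => ¬ p1 Y), f Y = 0 :=
    Finset.sum_eq_zero fun Y hY => h0 Y (mem_filter.1 hY).2
  rw [h, add_zero, ← Finset.sum_filter_add_sum_filter_not (univ.filter p1) p2 f,
    Finset.filter_filter, Finset.filter_filter]

private lemma sum_of_eq {α : Type*} {s : Finset α} {f : α → ℕ} {k c : ℕ}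
    (h : ∀ Y ∈ s, f Y + k = c) :
    (∑ Y ∈ s, f Y) + s.card * k = s.card * c := by
  have h2 : ∑ Y ∈ s, (f Y + k) = ∑ Y ∈ s, c := Finset.sum_congr rfl h
  rw [Finset.sum_add_distrib, Finset.sum_const, Finset.sum_const, smul_eq_mul,
    smul_eq_mul] at h2
  exact h2

/-- counts T_0, T_1, T_2 of pairs (X, Y) of nonempty subsets of [m] with
X ≠ Y, Y ∩ E = ∅ and χ(X|D) + χ(X ⊕ Y|D) = i, where X ⊕ Y is the symmetric difference. -/
theorem stmt2 (m : ℕ) (hm : 0 < m) (D E : Finset (Fin m)) :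
    (((Finset.univ ×ˢ Finset.univ).filter
        (fun XY : Finset (Fin m) × Finset (Fin m) =>
          XY.1 ≠ ∅ ∧ XY.2 ≠ ∅ ∧ XY.1 ≠ XY.2 ∧ XY.2 ∩ E = ∅ ∧
          chi XY.1 D + chi (symmDiff XY.1 XY.2) D = 0)).card : ℤ)
      = 2 ^ m * (2 ^ (m - E.card) - 1)
        + 2 ^ (m - D.card) * (1 + 2 ^ (m - (D ∪ E).card) - 2 ^ (m + 1 - E.card)) ∧
    (((Finset.univ ×ˢ Finset.univ).filter
        (fun XY : Finset (Fin m) × Finset (Fin m) =>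
          XY.1 ≠ ∅ ∧ XY.2 ≠ ∅ ∧ XY.1 ≠ XY.2 ∧ XY.2 ∩ E = ∅ ∧
          chi XY.1 D + chi (symmDiff XY.1 XY.2) D = 1)).card : ℤ)
      = 2 * (2 ^ (m - D.card) - 1) * (2 ^ (m - E.card) - 2 ^ (m - (D ∪ E).card)) ∧
    (((Finset.univ ×ˢ Finset.univ).filter
        (fun XY : Finset (Fin m) × Finset (Fin m) =>
          XY.1 ≠ ∅ ∧ XY.2 ≠ ∅ ∧ XY.1 ≠ XY.2 ∧ XY.2 ∩ E = ∅ ∧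
          chi XY.1 D + chi (symmDiff XY.1 XY.2) D = 2)).card : ℤ)
      = (2 ^ (m - D.card) - 2) * (2 ^ (m - (D ∪ E).card) - 1) := by
  classical
  have hEm : E.card ≤ m := by
    have := Finset.card_le_univ E
    simpa using this
  refine ⟨?_, ?_, ?_⟩
  · -- T_0
    have hsum : ((Finset.univ ×ˢ Finset.univ).filter
          (fun XY : Finset (Fin m) × Finset (Fin m) =>
            XY.1 ≠ ∅ ∧ XY.2 ≠ ∅ ∧ XY.1 ≠ XY.2 ∧ XY.2 ∩ E = ∅ ∧
            chi XY.1 D + chi (symmDiff XY.1 XY.2) D = 0)).card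
        = ∑ Y : Finset (Fin m), (univ.filter fun X : Finset (Fin m) =>
            X ≠ ∅ ∧ Y ≠ ∅ ∧ X ≠ Y ∧ Y ∩ E = ∅ ∧
            chi X D + chi (symmDiff X Y) D = 0).card := card_prod_filter _
    set f : Finset (Fin m) → ℕ := fun Y => (univ.filter fun X : Finset (Fin m) =>
        X ≠ ∅ ∧ Y ≠ ∅ ∧ X ≠ Y ∧ Y ∩ E = ∅ ∧
        chi X D + chi (symmDiff X Y) D = 0).card with hf
    have hsplit := split3 f (fun Y => Y ≠ ∅ ∧ Y ∩ E = ∅) (fun Y => Y ∩ D = ∅)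
      (fun Y hY => inner_zero_of D E Y 0 hY)
    have eSc : (∑ Y ∈ univ.filter
          (fun Y : Finset (Fin m) => (Y ≠ ∅ ∧ Y ∩ E = ∅) ∧ Y ∩ D = ∅), f Y)
        + (univ.filter
          (fun Y : Finset (Fin m) => (Y ≠ ∅ ∧ Y ∩ E = ∅) ∧ Y ∩ D = ∅)).card
          * 2 ^ (m - D.card)
        = (univ.filter
          (fun Y : Finset (Fin m) => (Y ≠ ∅ ∧ Y ∩ E = ∅) ∧ Y ∩ D = ∅)).card * 2 ^ m :=
      sum_of_eq (fun Y hY => by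
        rw [mem_filter] at hY
        exact inner0_empty D E Y hY.2.1.1 hY.2.1.2 hY.2.2)
    have eSbc : (∑ Y ∈ univ.filter
          (fun Y : Finset (Fin m) => (Y ≠ ∅ ∧ Y ∩ E = ∅) ∧ ¬(Y ∩ D = ∅)), f Y)
        + (univ.filter
          (fun Y : Finset (Fin m) => (Y ≠ ∅ ∧ Y ∩ E = ∅) ∧ ¬(Y ∩ D = ∅))).card
          * (2 * 2 ^ (m - D.card))
        = (univ.filter
          (fun Y : Finset (Fin m) => (Y ≠ ∅ ∧ Y ∩ E = ∅) ∧ ¬(Y ∩ D = ∅))).card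
          * 2 ^ m :=
      sum_of_eq (fun Y hY => by
        rw [mem_filter] at hY
        exact inner0_ne D E Y hY.2.1.2 hY.2.2)
    have eYc := cardYc D E
    have eYbc := cardYbc D E
    rw [hsum, hsplit]
    have hexp : m + 1 - E.card = (m - E.card) + 1 := by omega
    rw [hexp, pow_succ]
    have e1 : ((∑ Y ∈ univ.filter
          (fun Y : Finset (Fin m) => (Y ≠ ∅ ∧ Y ∩ E = ∅) ∧ Y ∩ D = ∅), f Y : ℕ) : ℤ)
        + ((univ.filter
          (fun Y : Finset (Fin m) => (Y ≠ ∅ ∧ Y ∩ E = ∅) ∧ Y ∩ D = ∅)).card : ℤ)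
          * 2 ^ (m - D.card)
        = ((univ.filter
          (fun Y : Finset (Fin m) => (Y ≠ ∅ ∧ Y ∩ E = ∅) ∧ Y ∩ D = ∅)).card : ℤ)
          * 2 ^ m := by exact_mod_cast eSc
    have e2 : ((∑ Y ∈ univ.filter
          (fun Y : Finset (Fin m) => (Y ≠ ∅ ∧ Y ∩ E = ∅) ∧ ¬(Y ∩ D = ∅)), f Y : ℕ) : ℤ)
        + ((univ.filter
          (fun Y : Finset (Fin m) => (Y ≠ ∅ ∧ Y ∩ E = ∅) ∧ ¬(Y ∩ D = ∅))).card : ℤ)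
          * (2 * 2 ^ (m - D.card))
        = ((univ.filter
          (fun Y : Finset (Fin m) => (Y ≠ ∅ ∧ Y ∩ E = ∅) ∧ ¬(Y ∩ D = ∅))).card : ℤ)
          * 2 ^ m := by exact_mod_cast eSbc
    have e3 : ((univ.filter
          (fun Y : Finset (Fin m) => (Y ≠ ∅ ∧ Y ∩ E = ∅) ∧ Y ∩ D = ∅)).card : ℤ) + 1
        = 2 ^ (m - (D ∪ E).card) := by exact_mod_cast eYc
    have e4 : ((univ.filter
          (fun Y : Finset (Fin m) => (Y ≠ ∅ ∧ Y ∩ E = ∅) ∧ ¬(Y ∩ D = ∅))).card : ℤ)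
        + 2 ^ (m - (D ∪ E).card) = 2 ^ (m - E.card) := by exact_mod_cast eYbc
    rw [Nat.cast_add]
    linear_combination e1 + e2 + ((2:ℤ) ^ m - 2 ^ (m - D.card)) * e3
      + ((2:ℤ) ^ m - 2 * 2 ^ (m - D.card)) * e4
  · -- T_1
    have hsum : ((Finset.univ ×ˢ Finset.univ).filter
          (fun XY : Finset (Fin m) × Finset (Fin m) =>
            XY.1 ≠ ∅ ∧ XY.2 ≠ ∅ ∧ XY.1 ≠ XY.2 ∧ XY.2 ∩ E = ∅ ∧
            chi XY.1 D + chi (symmDiff XY.1 XY.2) D = 1)).card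
        = ∑ Y : Finset (Fin m), (univ.filter fun X : Finset (Fin m) =>
            X ≠ ∅ ∧ Y ≠ ∅ ∧ X ≠ Y ∧ Y ∩ E = ∅ ∧
            chi X D + chi (symmDiff X Y) D = 1).card := card_prod_filter _
    set f : Finset (Fin m) → ℕ := fun Y => (univ.filter fun X : Finset (Fin m) =>
        X ≠ ∅ ∧ Y ≠ ∅ ∧ X ≠ Y ∧ Y ∩ E = ∅ ∧
        chi X D + chi (symmDiff X Y) D = 1).card with hf
    have hsplit := split3 f (fun Y => Y ≠ ∅ ∧ Y ∩ E = ∅) (fun Y => Y ∩ D = ∅)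
      (fun Y hY => inner_zero_of D E Y 1 hY)
    have eSc : (∑ Y ∈ univ.filter
          (fun Y : Finset (Fin m) => (Y ≠ ∅ ∧ Y ∩ E = ∅) ∧ Y ∩ D = ∅), f Y) = 0 :=
      Finset.sum_eq_zero (fun Y hY => by
        rw [mem_filter] at hY
        exact inner1_empty D E Y hY.2.2)
    have eSbc : (∑ Y ∈ univ.filter
          (fun Y : Finset (Fin m) => (Y ≠ ∅ ∧ Y ∩ E = ∅) ∧ ¬(Y ∩ D = ∅)), f Y)
        + (univ.filter
          (fun Y : Finset (Fin m) => (Y ≠ ∅ ∧ Y ∩ E = ∅) ∧ ¬(Y ∩ D = ∅))).card * 2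
        = (univ.filter
          (fun Y : Finset (Fin m) => (Y ≠ ∅ ∧ Y ∩ E = ∅) ∧ ¬(Y ∩ D = ∅))).card
          * (2 * 2 ^ (m - D.card)) :=
      sum_of_eq (fun Y hY => by
        rw [mem_filter] at hY
        exact inner1_ne D E Y hY.2.1.2 hY.2.2)
    have eYc := cardYc D E
    have eYbc := cardYbc D E
    rw [hsum, hsplit, eSc, zero_add]
    have e2 : ((∑ Y ∈ univ.filter
          (fun Y : Finset (Fin m) => (Y ≠ ∅ ∧ Y ∩ E = ∅) ∧ ¬(Y ∩ D = ∅)), f Y : ℕ) : ℤ)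
        + ((univ.filter
          (fun Y : Finset (Fin m) => (Y ≠ ∅ ∧ Y ∩ E = ∅) ∧ ¬(Y ∩ D = ∅))).card : ℤ) * 2
        = ((univ.filter
          (fun Y : Finset (Fin m) => (Y ≠ ∅ ∧ Y ∩ E = ∅) ∧ ¬(Y ∩ D = ∅))).card : ℤ)
          * (2 * 2 ^ (m - D.card)) := by exact_mod_cast eSbc
    have e4 : ((univ.filter
          (fun Y : Finset (Fin m) => (Y ≠ ∅ ∧ Y ∩ E = ∅) ∧ ¬(Y ∩ D = ∅))).card : ℤ)
        + 2 ^ (m - (D ∪ E).card) = 2 ^ (m - E.card) := by exact_mod_cast eYbc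
    linear_combination e2 + 2 * ((2:ℤ) ^ (m - D.card) - 1) * e4
  · -- T_2
    have hsum : ((Finset.univ ×ˢ Finset.univ).filter
          (fun XY : Finset (Fin m) × Finset (Fin m) =>
            XY.1 ≠ ∅ ∧ XY.2 ≠ ∅ ∧ XY.1 ≠ XY.2 ∧ XY.2 ∩ E = ∅ ∧
            chi XY.1 D + chi (symmDiff XY.1 XY.2) D = 2)).card
        = ∑ Y : Finset (Fin m), (univ.filter fun X : Finset (Fin m) =>
            X ≠ ∅ ∧ Y ≠ ∅ ∧ X ≠ Y ∧ Y ∩ E = ∅ ∧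
            chi X D + chi (symmDiff X Y) D = 2).card := card_prod_filter _
    set f : Finset (Fin m) → ℕ := fun Y => (univ.filter fun X : Finset (Fin m) =>
        X ≠ ∅ ∧ Y ≠ ∅ ∧ X ≠ Y ∧ Y ∩ E = ∅ ∧
        chi X D + chi (symmDiff X Y) D = 2).card with hf
    have hsplit := split3 f (fun Y => Y ≠ ∅ ∧ Y ∩ E = ∅) (fun Y => Y ∩ D = ∅)
      (fun Y hY => inner_zero_of D E Y 2 hY)
    have eSc : (∑ Y ∈ univ.filter
          (fun Y : Finset (Fin m) => (Y ≠ ∅ ∧ Y ∩ E = ∅) ∧ Y ∩ D = ∅), f Y)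
        + (univ.filter
          (fun Y : Finset (Fin m) => (Y ≠ ∅ ∧ Y ∩ E = ∅) ∧ Y ∩ D = ∅)).card * 2
        = (univ.filter
          (fun Y : Finset (Fin m) => (Y ≠ ∅ ∧ Y ∩ E = ∅) ∧ Y ∩ D = ∅)).card
          * 2 ^ (m - D.card) :=
      sum_of_eq (fun Y hY => by
        rw [mem_filter] at hY
        exact inner2_empty D E Y hY.2.1.1 hY.2.1.2 hY.2.2)
    have eSbc : (∑ Y ∈ univ.filter
          (fun Y : Finset (Fin m) => (Y ≠ ∅ ∧ Y ∩ E = ∅) ∧ ¬(Y ∩ D = ∅)), f Y) = 0 :=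
      Finset.sum_eq_zero (fun Y hY => by
        rw [mem_filter] at hY
        exact inner2_ne D E Y hY.2.2)
    have eYc := cardYc D E
    rw [hsum, hsplit, eSbc, add_zero]
    have e1 : ((∑ Y ∈ univ.filter
          (fun Y : Finset (Fin m) => (Y ≠ ∅ ∧ Y ∩ E = ∅) ∧ Y ∩ D = ∅), f Y : ℕ) : ℤ)
        + ((univ.filter
          (fun Y : Finset (Fin m) => (Y ≠ ∅ ∧ Y ∩ E = ∅) ∧ Y ∩ D = ∅)).card : ℤ) * 2
        = ((univ.filter
          (fun Y : Finset (Fin m) => (Y ≠ ∅ ∧ Y ∩ E = ∅) ∧ Y ∩ D = ∅)).card : ℤ)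
          * 2 ^ (m - D.card) := by exact_mod_cast eSc
    have e3 : ((univ.filter
          (fun Y : Finset (Fin m) => (Y ≠ ∅ ∧ Y ∩ E = ∅) ∧ Y ∩ D = ∅)).card : ℤ) + 1
        = 2 ^ (m - (D ∪ E).card) := by exact_mod_cast eYc
    linear_combination e1 + ((2:ℤ) ^ (m - D.card) - 2) * e3
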